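/- Let m > 0 and for x ≥ 0 define ζ(x) = m(1 - e^{-x}) + 1/n with n ∈ ℕ. Then for x ≥ log(1 + 1/n), (1/2)(m e^{-x} - m)(m e^{-x} - m - 1) + (1/2)ζ(x) + ζ(x)/(e^x - 1) - m ≥ (1/2) m^2 (1 - e^{-x})^2 ≥ 0. -/

import Mathlib

theorem stmt_9 (m : ℝ) (hm : 0 < m) (n : ℕ) (hn : 0 < n)
    (x : ℝ) (hx : Real.log (1 + 1/n) ≤ x) :
    (1/2) * (m * Real.exp (-x) - m) * (m * Real.exp (-x) - m - 1)
      + (1/2) * (m * (1 - Real.exp (-x)) + 1/n)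
      + (m * (1 - Real.exp (-x)) + 1/n) / (Real.exp x - 1) - m
    ≥ (1/2) * m^2 * (1 - Real.exp (-x))^2 ∧
    (1/2) * m^2 * (1 - Real.exp (-x))^2 ≥ 0 := by
  have hn' : (0:ℝ) < 1/n := by positivity
  have hE : 1 + 1/(n:ℝ) ≤ Real.exp x := by
    have := Real.exp_le_exp.mpr hx
    rwa [Real.exp_log (by positivity)] at this
  have hE1 : 0 < Real.exp x - 1 := by linarith
  have hu : Real.exp (-x) * Real.exp x = 1 := by
    rw [← Real.exp_add]; simp
  have key : (m * (1 - Real.exp (-x)) + 1/n) / (Real.exp x - 1)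
      = m * Real.exp (-x) + 1/(n*(Real.exp x - 1)) := by
    rw [div_eq_iff hE1.ne']
    field_simp
    linear_combination (-(n:ℝ)*m) * hu
  have hc : 0 < 1/((n:ℝ)*(Real.exp x - 1)) := by positivity
  constructor
  · rw [key]; nlinarith [hc, hn']
  · positivity
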